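/- With notation as in the context, every element of 𝒟(𝓕, [a,b]) is a linear function that is nonnegative on [a,b], the constant function 1 belongs to 𝒟(𝓕, [a,b]), and applying the operator 𝒟 on [a,b] to the set 𝒟(𝓕, [a,b]) returns the same set; that is, 𝒟(𝒟(𝓕, [a,b]), [a,b]) = 𝒟(𝓕, [a,b]). -/

import Mathlib

/-- A real function is linear if it has the form `t ↦ p * t + q`. -/
def IsLinearFun (f : ℝ → ℝ) : Prop := ∃ p q : ℝ, ∀ t, f t = p * t + q

/-- `(𝓕₊, [a,c])`: `{0}` together with all finite positive-integer combinations of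
elements of `𝓕` that are bounded above by `1` on `[a,c]`. -/
def FPlus (F : Set (ℝ → ℝ)) (a c : ℝ) : Set (ℝ → ℝ) :=
  {0} ∪ { v | (∃ k : ℕ, 0 < k ∧ ∃ n : Fin k → ℕ, ∃ f : Fin k → ℝ → ℝ,
      (∀ i, 0 < n i) ∧ (∀ i, f i ∈ F) ∧ v = fun t => ∑ i, (n i : ℝ) * f i t) ∧
      ∀ t ∈ Set.Icc a c, v t ≤ 1 }

/-- `D(𝓕, [a,c])`: all functions `(m - 1 + v)/m` with `m ∈ ℤ_{>0}`, `v ∈ (𝓕₊,[a,c])`,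
that are bounded above by `1` on `[a,c]`. -/
def DOp (F : Set (ℝ → ℝ)) (a c : ℝ) : Set (ℝ → ℝ) :=
  { w | ∃ m : ℕ, 0 < m ∧ ∃ v ∈ FPlus F a c,
      w = (fun t => ((m : ℝ) - 1 + v t) / m) ∧ ∀ t ∈ Set.Icc a c, w t ≤ 1 }

/-- `𝒟(𝓕, [a,b]) = ⋃_{a < c ≤ b} D(𝓕, [a,c])`. -/
def calD (F : Set (ℝ → ℝ)) (a b : ℝ) : Set (ℝ → ℝ) :=
  ⋃ c ∈ Set.Ioc a b, DOp F a c

lemma mem_FPlus_iff {F : Set (ℝ → ℝ)} {a c : ℝ} {v : ℝ → ℝ} :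
    v ∈ FPlus F a c ↔ v ∈ AddSubmonoid.closure F ∧ ∀ t ∈ Set.Icc a c, v t ≤ 1 := by
  constructor
  · rintro (rfl | ⟨⟨k, hk, n, f, hn, hf, rfl⟩, hb⟩)
    · exact ⟨zero_mem _, fun t _ => by simp⟩
    · refine ⟨?_, hb⟩
      have : (fun t => ∑ i, (n i : ℝ) * f i t) = ∑ i, (n i) • (f i) := by
        funext t
        rw [Finset.sum_apply]
        exact Finset.sum_congr rfl fun i _ => by simp [nsmul_eq_mul]
      rw [this]
      exact sum_mem fun i _ => nsmul_mem (AddSubmonoid.subset_closure (hf i)) _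
  · rintro ⟨hcl, hb⟩
    obtain ⟨l, hl, hsum⟩ := AddSubmonoid.exists_list_of_mem_closure hcl
    rcases l with _ | ⟨g, l'⟩
    · left; simp at hsum; exact hsum.symm
    · right
      refine ⟨⟨(g :: l').length, by simp, fun _ => 1, fun i => (g :: l')[i], fun i => one_pos,
        fun i => hl _ (List.getElem_mem _), ?_⟩, hb⟩
      funext t
      have h0 : v t = ((g :: l').sum) t := by rw [hsum]
      rw [h0, ← Fin.sum_univ_getElem, Finset.sum_apply]
      refine Finset.sum_congr rfl fun i _ => ?_
      simp

lemma closure_linear {F : Set (ℝ → ℝ)} (hlin : ∀ f ∈ F, IsLinearFun f) {v : ℝ → ℝ}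
    (hv : v ∈ AddSubmonoid.closure F) : IsLinearFun v := by
  induction hv using AddSubmonoid.closure_induction with
  | mem x hx => exact hlin x hx
  | zero => exact ⟨0, 0, fun t => by simp⟩
  | add x y hx hy ihx ihy =>
    obtain ⟨p, q, hpq⟩ := ihx
    obtain ⟨p', q', hpq'⟩ := ihy
    exact ⟨p + p', q + q', fun t => by simp [Pi.add_apply, hpq, hpq']; ring⟩

lemma closure_nonneg {F : Set (ℝ → ℝ)} {a b : ℝ}
    (hnonneg : ∀ f ∈ F, ∀ t ∈ Set.Icc a b, 0 ≤ f t) {v : ℝ → ℝ}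
    (hv : v ∈ AddSubmonoid.closure F) : ∀ t ∈ Set.Icc a b, 0 ≤ v t := by
  induction hv using AddSubmonoid.closure_induction with
  | mem x hx => exact hnonneg x hx
  | zero => intro t ht; simp
  | add x y hx hy ihx ihy =>
    intro t ht
    exact add_nonneg (ihx t ht) (ihy t ht)

lemma DOp_mono {F : Set (ℝ → ℝ)} {a c c' : ℝ} (h : c' ≤ c) :
    DOp F a c ⊆ DOp F a c' := by
  rintro w ⟨m, hm, v, hv, rfl, hb⟩
  have hsub : Set.Icc a c' ⊆ Set.Icc a c := Set.Icc_subset_Icc le_rfl h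
  rw [mem_FPlus_iff] at hv
  exact ⟨m, hm, v, mem_FPlus_iff.mpr ⟨hv.1, fun t ht => hv.2 t (hsub ht)⟩, rfl,
    fun t ht => hb t (hsub ht)⟩

/-- Common `c` for a finite list of members of `calD`. -/
lemma exists_common_c {F : Set (ℝ → ℝ)} {a b : ℝ} (hab : a < b) :
    ∀ l : List (ℝ → ℝ), (∀ g ∈ l, g ∈ calD F a b) →
      ∃ c ∈ Set.Ioc a b, ∀ g ∈ l, g ∈ DOp F a c := by
  intro l
  induction l with
  | nil => exact fun _ => ⟨b, ⟨hab, le_rfl⟩, fun g hg => by simp at hg⟩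
  | cons g l' ih =>
    intro h
    obtain ⟨c', hc', hl'⟩ := ih fun x hx => h x (List.mem_cons_of_mem _ hx)
    have hg := h g List.mem_cons_self
    rw [calD, Set.mem_iUnion₂] at hg
    obtain ⟨c₁, hc₁, hgc₁⟩ := hg
    refine ⟨min c₁ c', ⟨lt_min hc₁.1 hc'.1, min_le_of_left_le hc₁.2⟩, ?_⟩
    intro x hx
    rcases List.mem_cons.mp hx with rfl | hx'
    · exact DOp_mono (min_le_left _ _) hgc₁
    · exact DOp_mono (min_le_right _ _) (hl' x hx')

/-- Key induction: a sum of a list of members of `DOp F a c` has the form `(P-1+V)/P`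
with `V` in the additive closure of `F`, provided `1 ∈ F`. -/
lemma sum_list_DOp {F : Set (ℝ → ℝ)} {a c : ℝ} (hone : (fun _ => (1 : ℝ)) ∈ F) :
    ∀ l : List (ℝ → ℝ), (∀ g ∈ l, g ∈ DOp F a c) →
      ∃ P : ℕ, 0 < P ∧ ∃ V ∈ AddSubmonoid.closure F,
        ∀ t, l.sum t = ((P : ℝ) - 1 + V t) / P := by
  intro l
  induction l with
  | nil =>
    exact fun _ => ⟨1, one_pos, 0, zero_mem _, fun t => by simp⟩
  | cons g l' ih =>
    intro h
    obtain ⟨P, hP, V, hV, hVsum⟩ := ih fun x hx => h x (List.mem_cons_of_mem _ hx)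
    obtain ⟨m, hm, v, hv, hgeq, -⟩ := h g List.mem_cons_self
    rw [mem_FPlus_iff] at hv
    refine ⟨m * P, Nat.mul_pos hm hP,
      (((m - 1) * (P - 1)) • (fun _ => (1 : ℝ)) + P • v + m • V : ℝ → ℝ),
      add_mem (add_mem (nsmul_mem (AddSubmonoid.subset_closure hone) _)
        (nsmul_mem hv.1 _)) (nsmul_mem hV _), ?_⟩
    intro t
    have h1 : (g :: l').sum t = g t + l'.sum t := by simp [List.sum_cons]
    rw [h1, hgeq, hVsum t]
    have hmr : (0:ℝ) < (m : ℝ) := by exact_mod_cast hm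
    have hPr : (0:ℝ) < (P : ℝ) := by exact_mod_cast hP
    have h2 : ((((m - 1) * (P - 1)) • (fun _ => (1 : ℝ)) + P • v + m • V : ℝ → ℝ)) t
        = (((m - 1) * (P - 1) : ℕ) : ℝ) * 1 + (P : ℝ) * v t + (m : ℝ) * V t := by
      simp [nsmul_eq_mul]
    rw [h2]
    have hcast : (((m - 1) * (P - 1) : ℕ) : ℝ) = ((m:ℝ) - 1) * ((P:ℝ) - 1) := by
      push_cast [Nat.cast_sub hm, Nat.cast_sub hP]
      ring
    rw [hcast]
    push_cast
    field_simp
    ring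

theorem calD_idem (a b : ℝ) (hab : a < b) (F : Set (ℝ → ℝ))
    (hlin : ∀ f ∈ F, IsLinearFun f)
    (hnonneg : ∀ f ∈ F, ∀ t ∈ Set.Icc a b, 0 ≤ f t)
    (hone : (fun _ => (1 : ℝ)) ∈ F) :
    (∀ w ∈ calD F a b, IsLinearFun w ∧ ∀ t ∈ Set.Icc a b, 0 ≤ w t) ∧
    (fun _ => (1 : ℝ)) ∈ calD F a b ∧
    calD (calD F a b) a b = calD F a b := by
  have part1 : ∀ w ∈ calD F a b, IsLinearFun w ∧ ∀ t ∈ Set.Icc a b, 0 ≤ w t := by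
    intro w hw
    rw [calD, Set.mem_iUnion₂] at hw
    obtain ⟨c, hc, m, hm, v, hv, rfl, hb⟩ := hw
    rw [mem_FPlus_iff] at hv
    have hmr : (0:ℝ) < (m : ℝ) := by exact_mod_cast hm
    have hm1 : (1:ℝ) ≤ (m:ℝ) := by exact_mod_cast hm
    constructor
    · obtain ⟨p, q, hpq⟩ := closure_linear hlin hv.1
      refine ⟨p / m, ((m:ℝ) - 1 + q) / m, fun t => ?_⟩
      show ((m:ℝ) - 1 + v t) / m = p / m * t + ((m:ℝ) - 1 + q) / m
      rw [hpq]; field_simp; ring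
    · intro t ht
      have hv0 := closure_nonneg hnonneg hv.1 t ht
      show 0 ≤ ((m:ℝ) - 1 + v t) / m
      apply div_nonneg _ hmr.le
      linarith
  have part2 : (fun _ => (1 : ℝ)) ∈ calD F a b := by
    rw [calD, Set.mem_iUnion₂]
    refine ⟨b, ⟨hab, le_rfl⟩, 1, one_pos, fun _ => (1:ℝ),
      mem_FPlus_iff.mpr ⟨AddSubmonoid.subset_closure hone, fun t _ => le_rfl⟩,
      by funext t; norm_num, fun t _ => le_rfl⟩
  refine ⟨part1, part2, ?_⟩
  apply Set.eq_of_subset_of_subset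
  · -- calD (calD F a b) a b ⊆ calD F a b
    intro w hw
    rw [calD, Set.mem_iUnion₂] at hw
    obtain ⟨c, hc, m, hm, v, hv, hweq, hwb⟩ := hw
    rw [mem_FPlus_iff] at hv
    obtain ⟨l, hl, hlsum⟩ := AddSubmonoid.exists_list_of_mem_closure hv.1
    obtain ⟨c', hc', hlD⟩ := exists_common_c hab l hl
    set c₀ := min c c' with hc₀
    have hc₀mem : c₀ ∈ Set.Ioc a b := ⟨lt_min hc.1 hc'.1, min_le_of_left_le hc.2⟩
    have hsub : Set.Icc a c₀ ⊆ Set.Icc a c := Set.Icc_subset_Icc le_rfl (min_le_left _ _)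
    have hlD₀ : ∀ g ∈ l, g ∈ DOp F a c₀ :=
      fun g hg => DOp_mono (min_le_right _ _) (hlD g hg)
    obtain ⟨P, hP, V, hVcl, hVsum⟩ := sum_list_DOp hone l hlD₀
    have hmr : (0:ℝ) < (m : ℝ) := by exact_mod_cast hm
    have hPr : (0:ℝ) < (P : ℝ) := by exact_mod_cast hP
    have hveq : ∀ t, v t = ((P : ℝ) - 1 + V t) / P := by
      intro t; rw [← hlsum]; exact hVsum t
    rw [calD, Set.mem_iUnion₂]
    refine ⟨c₀, hc₀mem, m * P, Nat.mul_pos hm hP, V, ?_, ?_, fun t ht => hwb t (hsub ht)⟩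
    · rw [mem_FPlus_iff]
      refine ⟨hVcl, fun t ht => ?_⟩
      have h1 : w t ≤ 1 := hwb t (hsub ht)
      rw [hweq] at h1
      simp only at h1
      rw [div_le_one hmr, hveq t] at h1
      have h2 : ((P : ℝ) - 1 + V t) / P ≤ 1 := by linarith
      rw [div_le_one hPr] at h2
      linarith
    · funext t
      rw [hweq]
      simp only
      rw [hveq t]
      push_cast
      field_simp
      ring
  · -- calD F a b ⊆ calD (calD F a b) a b
    intro w hw
    have hw' := hw
    rw [calD, Set.mem_iUnion₂] at hw'
    obtain ⟨c, hc, m, hm, v, hv, hweq, hwb⟩ := hw'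
    rw [calD, Set.mem_iUnion₂]
    refine ⟨c, hc, 1, one_pos, w,
      mem_FPlus_iff.mpr ⟨AddSubmonoid.subset_closure hw, hwb⟩, ?_, hwb⟩
    funext t; norm_num
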